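/- Let n, m, p, r be positive natural numbers. Let Y be an n × m real matrix with all entries in {0,1}, let X be an n × p real matrix, let t ∈ ℝ^n with t_i ∈ {−1, 1} for all i, let T = diag(t), and let a ∈ ℝ^n with a_i > 0 for all i, with A = diag(a). For V an m × r real matrix and W a p × r real matrix define L_W(V, W) = Σ_{i=1}^n Σ_{j=1}^m a_i · Y_{ij} · log(1 + exp(−(T X W Vᵀ)_{ij})). Fix supporting matrices V⁰ (m × r) and W⁰ (p × r), let Φ be the n × m matrix with Φ_{ij} = exp(−(T X W⁰ V⁰ᵀ)_{ij}) / (1 + exp(−(T X W⁰ V⁰ᵀ)_{ij})), and set Z = T X W⁰ V⁰ᵀ + 4 (Y ⊙ Φ), where ⊙ is the entrywise (Hadamard) product. Then for all m × r matrices V and p × r matrices W: L_W(V, W) − L_W(V⁰, W⁰) ≤ (1/8) · ( Σ_{i,j} a_i (Z − T X W Vᵀ)_{ij}² − Σ_{i,j} a_i (Z − T X W⁰ V⁰ᵀ)_{ij}² ). -/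

import Mathlib

noncomputable def gfun (y : ℝ) : ℝ := Real.exp (-y) / (1 + Real.exp (-y))

lemma one_add_exp_pos (y : ℝ) : 0 < 1 + Real.exp (-y) := by positivity

lemma hasDerivAt_g (y : ℝ) :
    HasDerivAt gfun (-(Real.exp (-y) / (1 + Real.exp (-y)) ^ 2)) y := by
  have h1 : HasDerivAt (fun y : ℝ => Real.exp (-y)) (-Real.exp (-y)) y := by
    exact (hasDerivAt_neg' y).exp.congr_deriv (by ring)
  have h2 : HasDerivAt (fun y : ℝ => 1 + Real.exp (-y)) (-Real.exp (-y)) y := by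
    exact h1.const_add 1
  have := h1.div h2 (ne_of_gt (one_add_exp_pos y))
  exact this.congr_deriv (by ring)

lemma hasDerivAt_f (y : ℝ) :
    HasDerivAt (fun y : ℝ => Real.log (1 + Real.exp (-y))) (-(gfun y)) y := by
  have h1 : HasDerivAt (fun y : ℝ => Real.exp (-y)) (-Real.exp (-y)) y := by
    exact (hasDerivAt_neg' y).exp.congr_deriv (by ring)
  have h2 : HasDerivAt (fun y : ℝ => 1 + Real.exp (-y)) (-Real.exp (-y)) y := by
    exact h1.const_add 1
  have := h2.log (ne_of_gt (one_add_exp_pos y))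
  unfold gfun
  rw [neg_div] at this
  exact this

noncomputable def Gfun (y : ℝ) : ℝ := y / 4 + gfun y

lemma G_mono : Monotone Gfun := by
  have hG : ∀ y : ℝ, HasDerivAt Gfun (1/4 - Real.exp (-y) / (1 + Real.exp (-y)) ^ 2) y := by
    intro y
    have := ((hasDerivAt_id y).div_const 4).add (hasDerivAt_g y)
    refine this.congr_deriv ?_
    try ring
  apply monotone_of_deriv_nonneg
  · exact fun y => (hG y).differentiableAt
  · intro y
    rw [(hG y).deriv]
    have he := Real.exp_pos (-y)
    have h4 : 4 * Real.exp (-y) ≤ (1 + Real.exp (-y)) ^ 2 := by nlinarith [sq_nonneg (1 - Real.exp (-y))]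
    rw [sub_nonneg, div_le_iff₀ (by positivity)]
    linarith

lemma key (x0 x : ℝ) :
    Real.log (1 + Real.exp (-x)) - Real.log (1 + Real.exp (-x0)) ≤
      (x - x0) ^ 2 / 8 - Real.exp (-x0) / (1 + Real.exp (-x0)) * (x - x0) := by
  set F : ℝ → ℝ := fun x => (x - x0) ^ 2 / 8 - gfun x0 * (x - x0) +
    Real.log (1 + Real.exp (-x0)) - Real.log (1 + Real.exp (-x)) with hF
  have hF' : ∀ y : ℝ, HasDerivAt F (Gfun y - Gfun x0) y := by
    intro y
    have h1 : HasDerivAt (fun x : ℝ => (x - x0) ^ 2 / 8) ((y - x0) / 4) y := by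
      have := (((hasDerivAt_id y).sub_const x0).pow 2).div_const 8
      refine this.congr_deriv ?_; simp; ring
    have h2 : HasDerivAt (fun x : ℝ => gfun x0 * (x - x0)) (gfun x0) y := by
      simpa using (HasDerivAt.const_mul (gfun x0) ((hasDerivAt_id y).sub_const x0))
    have := ((h1.sub h2).add_const (Real.log (1 + Real.exp (-x0)))).sub (hasDerivAt_f y)
    refine this.congr_deriv ?_
    unfold Gfun
    ring
  have hcont : Continuous F := by
    have : Differentiable ℝ F := fun y => (hF' y).differentiableAt
    exact this.continuous
  have hF0 : F x0 = 0 := by simp [hF]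
  have hFge : ∀ y, 0 ≤ F y := by
    intro y
    rcases le_total x0 y with h | h
    · have hmono : MonotoneOn F (Set.Ici x0) := by
        apply monotoneOn_of_deriv_nonneg (convex_Ici x0) (hcont.continuousOn)
        · intro z _
          exact (hF' z).differentiableAt.differentiableWithinAt
        · intro z hz
          rw [(hF' z).deriv]
          rw [interior_Ici] at hz
          exact sub_nonneg.mpr (G_mono hz.le)
      have := hmono (Set.self_mem_Ici) (Set.mem_Ici.mpr h) h
      linarith [hF0]
    · have hanti : AntitoneOn F (Set.Iic x0) := by
        apply antitoneOn_of_deriv_nonpos (convex_Iic x0) (hcont.continuousOn)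
        · intro z _
          exact (hF' z).differentiableAt.differentiableWithinAt
        · intro z hz
          rw [(hF' z).deriv]
          rw [interior_Iic] at hz
          exact sub_nonpos.mpr (G_mono hz.le)
      have := hanti (Set.mem_Iic.mpr h) (Set.self_mem_Iic) h
      linarith [hF0]
  have := hFge x
  simp only [hF] at this
  unfold gfun at this
  linarith

open Matrix

theorem stmt_12 (n m p r : ℕ) (hn : 0 < n) (hm : 0 < m) (hp : 0 < p) (hr : 0 < r)
    (Y : Matrix (Fin n) (Fin m) ℝ) (hY : ∀ i j, Y i j = 0 ∨ Y i j = 1)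
    (X : Matrix (Fin n) (Fin p) ℝ)
    (t : Fin n → ℝ) (ht : ∀ i, t i = -1 ∨ t i = 1)
    (T : Matrix (Fin n) (Fin n) ℝ) (hT : T = Matrix.diagonal t)
    (a : Fin n → ℝ) (ha : ∀ i, 0 < a i)
    (A : Matrix (Fin n) (Fin n) ℝ) (hA : A = Matrix.diagonal a)
    (LW : Matrix (Fin m) (Fin r) ℝ → Matrix (Fin p) (Fin r) ℝ → ℝ)
    (hLW : LW = fun V W =>
      ∑ i, ∑ j, a i * Y i j * Real.log (1 + Real.exp (-((T * X * W * Vᵀ) i j))))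
    (V₀ : Matrix (Fin m) (Fin r) ℝ) (W₀ : Matrix (Fin p) (Fin r) ℝ)
    (Φ : Matrix (Fin n) (Fin m) ℝ)
    (hΦ : ∀ i j, Φ i j = Real.exp (-((T * X * W₀ * V₀ᵀ) i j)) /
                          (1 + Real.exp (-((T * X * W₀ * V₀ᵀ) i j))))
    (Z : Matrix (Fin n) (Fin m) ℝ)
    (hZ : Z = T * X * W₀ * V₀ᵀ + 4 • (Y ⊙ Φ)) :
    ∀ (V : Matrix (Fin m) (Fin r) ℝ) (W : Matrix (Fin p) (Fin r) ℝ),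
      LW V W - LW V₀ W₀ ≤
        (1 / 8) * ((∑ i, ∑ j, a i * ((Z - T * X * W * Vᵀ) i j) ^ 2) -
                   (∑ i, ∑ j, a i * ((Z - T * X * W₀ * V₀ᵀ) i j) ^ 2)) := by
  intro V W
  subst hLW hZ
  simp only
  simp only [← Finset.sum_sub_distrib]
  rw [Finset.mul_sum]
  apply Finset.sum_le_sum
  intro i _
  rw [Finset.mul_sum]
  apply Finset.sum_le_sum
  intro j _
  set x := (T * X * W * Vᵀ) i j with hx
  set x0 := (T * X * W₀ * V₀ᵀ) i j with hx0
  have hent1 : ((T * X * W₀ * V₀ᵀ + 4 • (Y ⊙ Φ) - T * X * W * Vᵀ : Matrix (Fin n) (Fin m) ℝ)) i j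
      = x0 + 4 * (Y i j * Φ i j) - x := by
    simp [Matrix.sub_apply, Matrix.add_apply, Matrix.smul_apply, Matrix.hadamard_apply,
      smul_eq_mul]
    rfl
  have hent2 : ((T * X * W₀ * V₀ᵀ + 4 • (Y ⊙ Φ) - T * X * W₀ * V₀ᵀ : Matrix (Fin n) (Fin m) ℝ)) i j
      = 4 * (Y i j * Φ i j) := by
    simp [Matrix.sub_apply, Matrix.add_apply, Matrix.smul_apply, Matrix.hadamard_apply,
      smul_eq_mul]
  rw [hent1, hent2]
  have hφ : Φ i j = Real.exp (-x0) / (1 + Real.exp (-x0)) := hΦ i j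
  have hai := ha i
  rcases hY i j with hy | hy
  · rw [hy]
    simp only [mul_zero, zero_mul, mul_zero, sub_zero]
    have : (0:ℝ) ≤ 1/8 * (a i * (x0 + 4 * 0 - x) ^ 2 - a i * (4 * 0) ^ 2) := by
      have := sq_nonneg (x0 - x)
      nlinarith
    simpa using this
  · rw [hy, hφ]
    have hk := key x0 x
    nlinarith [mul_le_mul_of_nonneg_left hk hai.le, sq_nonneg (x - x0)]
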